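/- Let Σ_4 be the rank-5 lattice with basis A, E1, E2, E3, E4 and Gram matrix [[0,1,0,0,0],[1,-2,0,0,0],[0,0,-2,0,0],[0,0,0,-2,0],[0,0,0,0,-2]]. Then the map σ sending B ↦ 2A + E1, C1 ↦ -A + E2, C2 ↦ -A + E3, C3 ↦ -A + E4 defines a primitive embedding of the rank-4 lattice Λ with Gram matrix [[2,-1,-1,-1],[-1,-2,0,0],[-1,0,-2,0],[-1,0,0,-2]] (in the basis B, C1, C2, C3) into Σ_4. -/

import Mathlib

/-- The bilinear form of the rank-5 lattice `Σ₄` with Gram matrix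
`[[0,1],[1,-2]] ⊕ ⟨-2⟩³` in the basis `A, E1, E2, E3, E4`. -/
def form5 (u v : Fin 5 → ℤ) : ℤ :=
  u 0 * v 1 + u 1 * v 0 - 2 * (u 1 * v 1 + u 2 * v 2 + u 3 * v 3 + u 4 * v 4)

/-- The Gram matrix of Nikulin's rank-4 lattice in the basis `B, C1, C2, C3`. -/
def gram16 : Matrix (Fin 4) (Fin 4) ℤ :=
  !![2, -1, -1, -1; -1, -2, 0, 0; -1, 0, -2, 0; -1, 0, 0, -2]

/-- The map `B ↦ 2A + E1`, `C1 ↦ -A + E2`, `C2 ↦ -A + E3`, `C3 ↦ -A + E4`. -/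
def sigma16 (x : Fin 4 → ℤ) : Fin 5 → ℤ :=
  x 0 • ![2, 1, 0, 0, 0] + x 1 • ![-1, 0, 1, 0, 0] +
    x 2 • ![-1, 0, 0, 1, 0] + x 3 • ![-1, 0, 0, 0, 1]

lemma sigma16_apply (x : Fin 4 → ℤ) :
    sigma16 x = ![2 * x 0 - x 1 - x 2 - x 3, x 0, x 1, x 2, x 3] := by
  funext i
  fin_cases i <;> simp [sigma16] <;> ring

/-- `sigma16` is a primitive embedding of the rank-4 lattice with Gram matrix
`gram16` into `Σ₄`. -/
theorem stmt_16 :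
    (∀ x y : Fin 4 → ℤ,
      form5 (sigma16 x) (sigma16 y) = dotProduct x (gram16.mulVec y)) ∧
    Function.Injective sigma16 ∧
    (∀ (y : Fin 5 → ℤ) (n : ℤ), n ≠ 0 →
      n • y ∈ Set.range sigma16 → y ∈ Set.range sigma16) := by
  refine ⟨?_, ?_, ?_⟩
  · intro x y
    have hg : gram16.mulVec y = ![2*y 0 - y 1 - y 2 - y 3, -y 0 - 2*y 1, -y 0 - 2*y 2, -y 0 - 2*y 3] := by
      funext i
      fin_cases i <;>
        simp [gram16, Matrix.mulVec, dotProduct, Fin.sum_univ_four] <;> ring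
    rw [hg]
    simp [sigma16_apply, form5, dotProduct, Fin.sum_univ_four]
    ring
  · intro x y h
    rw [sigma16_apply, sigma16_apply] at h
    funext i
    fin_cases i
    · exact congrFun h 1
    · exact congrFun h 2
    · exact congrFun h 3
    · exact congrFun h 4
  · rintro y n hn ⟨x, hx⟩
    rw [sigma16_apply] at hx
    refine ⟨![y 1, y 2, y 3, y 4], ?_⟩
    rw [sigma16_apply]
    have h0 := congrFun hx 0
    have h1 := congrFun hx 1
    have h2 := congrFun hx 2
    have h3 := congrFun hx 3
    have h4 := congrFun hx 4
    simp at h0 h1 h2 h3 h4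
    funext i
    fin_cases i <;> simp
    have : n * y 0 = n * (2 * y 1 - y 2 - y 3 - y 4) := by
      rw [← h0, h1, h2, h3, h4]; ring
    have := mul_left_cancel₀ hn this
    linarith
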